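/- If (α_i)_{i∈[r]} is a generic filtration dimension for α = ∑ α_i (i.e. every representation of dimension α admits a filtration of dimension (α_i)), then ∑_{i<j} ⟨α_i, α_j⟩ ≥ 0, where ⟨·,·⟩ is the Euler–Ringel form of Q. -/

import Mathlib

open Module

def IsSubrep {Vt At : Type} (hd tl : At → Vt) (α : Vt → ℕ)
    (M : ∀ a : At, Matrix (Fin (α (hd a))) (Fin (α (tl a))) ℂ)
    (W : ∀ x : Vt, Submodule ℂ (Fin (α x) → ℂ)) : Prop :=
  ∀ a : At, ∀ v ∈ W (tl a), (M a).mulVec v ∈ W (hd a)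

/-- `F` is a filtration `0 = F₀ ⊆ F₁ ⊆ … ⊆ F_r = V` of subrepresentations of
`M` with `dim F_i − dim F_{i−1} = αs i`. -/
def IsQuiverRepFiltration {Vt At : Type} (hd tl : At → Vt) (α : Vt → ℕ)
    (M : ∀ a : At, Matrix (Fin (α (hd a))) (Fin (α (tl a))) ℂ)
    {r : ℕ} (αs : Fin r → Vt → ℕ)
    (F : Fin (r + 1) → ∀ x : Vt, Submodule ℂ (Fin (α x) → ℂ)) : Prop :=
  (∀ i, IsSubrep hd tl α M (F i)) ∧
  (∀ i j : Fin (r + 1), i ≤ j → ∀ x, F i x ≤ F j x) ∧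
  (∀ x, F 0 x = ⊥) ∧ (∀ x, F (Fin.last r) x = ⊤) ∧
  (∀ i : Fin r, ∀ x,
    Module.finrank ℂ (F i.succ x) = Module.finrank ℂ (F i.castSucc x) + αs i x)

/-- `M` admits a filtration of dimension `(αs i)`. -/
def HasFiltration {Vt At : Type} (hd tl : At → Vt) (α : Vt → ℕ)
    (M : ∀ a : At, Matrix (Fin (α (hd a))) (Fin (α (tl a))) ℂ)
    {r : ℕ} (αs : Fin r → Vt → ℕ) : Prop :=
  ∃ F, IsQuiverRepFiltration hd tl α M αs F
/-- The Euler–Ringel form `⟨β,γ⟩ = ∑_x β(x)γ(x) − ∑_a β(ta)γ(ha)`. -/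
def eulerForm {Vt At : Type} [Fintype Vt] [Fintype At] (hd tl : At → Vt)
    (β γ : Vt → ℕ) : ℤ :=
  ∑ x, (β x : ℤ) * γ x - ∑ a, (β (tl a) : ℤ) * γ (hd a)


open Module Set MeasureTheory

/-- A differentiable map from a lower-dimensional space has null range. -/
theorem range_null_of_differentiable_of_finrank_lt
    {E F : Type*} [NormedAddCommGroup E] [NormedSpace ℝ E] [FiniteDimensional ℝ E]
    [NormedAddCommGroup F] [NormedSpace ℝ F] [FiniteDimensional ℝ F]
    [MeasurableSpace F] [BorelSpace F] (μ : Measure F) [μ.IsAddHaarMeasure]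
    (f : E → F) (hf : Differentiable ℝ f) (h : finrank ℝ E < finrank ℝ F) :
    μ (range f) = 0 := by
  -- choose a surjective continuous linear map L : F → E
  obtain ⟨L, hL⟩ : ∃ L : F →ₗ[ℝ] E, Function.Surjective L := by
    let bE := Module.finBasis ℝ E
    let bF := Module.finBasis ℝ F
    refine ⟨(bE.equivFun.symm.toLinearMap.comp
      (LinearMap.funLeft ℝ ℝ (Fin.castLE h.le))).comp bF.equivFun.toLinearMap, ?_⟩
    simp only [LinearMap.coe_comp, LinearEquiv.coe_coe]
    exact bE.equivFun.symm.surjective.comp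
      ((LinearMap.funLeft_surjective_of_injective ℝ ℝ _ (Fin.castLE_injective h.le)).comp
        bF.equivFun.surjective)
  let L' : F →L[ℝ] E := ⟨L, L.continuous_of_finiteDimensional⟩
  have hgdiff : Differentiable ℝ (f ∘ L') := hf.comp L'.differentiable
  have hL' : Function.Surjective ⇑L' := hL
  have hrange : range f = (f ∘ L') '' univ := by
    rw [image_univ, Set.range_comp, hL'.range_eq, image_univ]
  rw [hrange]
  apply addHaar_image_eq_zero_of_det_fderivWithin_eq_zero μ
    (f' := fun x => fderiv ℝ (f ∘ L') x)
    (fun x _ => (hgdiff x).hasFDerivAt.hasFDerivWithinAt)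
  intro x _
  by_contra hdet
  have : Function.Surjective (fderiv ℝ (f ∘ L') x) :=
    (LinearMap.equivOfDetNeZero _ hdet).surjective
  have h1 : finrank ℝ F ≤ finrank ℝ E := by
    have h3 : fderiv ℝ (f ∘ L') x = (fderiv ℝ f (L' x)).comp L' := by
      rw [fderiv_comp x (hf _) L'.differentiableAt, L'.fderiv]
    rw [h3] at this
    have h5 : LinearMap.range ((fderiv ℝ f (L' x)).toLinearMap.comp L'.toLinearMap) = ⊤ :=
      LinearMap.range_eq_top.2 this
    have h6 : finrank ℝ F = finrank ℝ
        ↥(LinearMap.range ((fderiv ℝ f (L' x)).toLinearMap.comp L'.toLinearMap)) := by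
      rw [h5, finrank_top]
    calc finrank ℝ F ≤ finrank ℝ ↥(LinearMap.range (fderiv ℝ f (L' x)).toLinearMap) :=
          h6.le.trans (Submodule.finrank_mono (LinearMap.range_comp_le_range _ _))
      _ ≤ finrank ℝ E := LinearMap.finrank_range_le _
  omega

theorem not_univ_subset_iUnion_range {ι : Type*} [Finite ι] {E : ι → Type*}
    [∀ i, NormedAddCommGroup (E i)] [∀ i, NormedSpace ℝ (E i)]
    [∀ i, FiniteDimensional ℝ (E i)] {F : Type*} [NormedAddCommGroup F]
    [NormedSpace ℝ F] [FiniteDimensional ℝ F] (f : ∀ i, E i → F)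
    (hf : ∀ i, Differentiable ℝ (f i)) (hlt : ∀ i, finrank ℝ (E i) < finrank ℝ F) :
    ¬ (univ : Set F) ⊆ ⋃ i, range (f i) := by
  borelize F
  intro hcov
  have : Countable ι := Finite.to_countable
  let μ : Measure F := (Module.finBasis ℝ F).addHaar
  have h0 : μ (⋃ i, range (f i)) = 0 :=
    measure_iUnion_null fun i =>
      range_null_of_differentiable_of_finrank_lt μ (f i) (hf i) (hlt i)
  have h1 : μ (univ : Set F) = 0 := le_antisymm (h0 ▸ measure_mono hcov) zero_le
  exact (isOpen_univ.measure_pos μ univ_nonempty).ne' h1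

open Module Finset

variable {n : ℕ}

open Classical in
/-- The set of indices that occur as leading coordinate of a vector of `W`. -/
noncomputable def pivots (W : Submodule ℂ (Fin n → ℂ)) : Finset (Fin n) :=
  Finset.univ.filter fun q => ∃ v ∈ W, v q ≠ 0 ∧ ∀ j < q, v j = 0

lemma mem_pivots {W : Submodule ℂ (Fin n → ℂ)} {q : Fin n} :
    q ∈ pivots W ↔ ∃ v ∈ W, v q ≠ 0 ∧ ∀ j < q, v j = 0 := by
  simp [pivots]

lemma pivots_mono {W W' : Submodule ℂ (Fin n → ℂ)} (h : W ≤ W') :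
    pivots W ⊆ pivots W' := by
  intro q hq
  rw [mem_pivots] at *
  obtain ⟨v, hv, h1, h2⟩ := hq
  exact ⟨v, h hv, h1, h2⟩

lemma pivots_bot : pivots (⊥ : Submodule ℂ (Fin n → ℂ)) = ∅ := by
  ext q
  simp only [mem_pivots, Submodule.mem_bot, Finset.notMem_empty, iff_false, not_exists]
  rintro v ⟨rfl, h1, -⟩
  simp at h1

lemma pivots_top : pivots (⊤ : Submodule ℂ (Fin n → ℂ)) = Finset.univ := by
  ext q
  simp only [Finset.mem_univ, iff_true, mem_pivots]
  refine ⟨Pi.single q 1, trivial, by simp, fun j hj => Pi.single_eq_of_ne hj.ne 1⟩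

lemma eq_zero_of_vanish_on_pivots {W : Submodule ℂ (Fin n → ℂ)} {v : Fin n → ℂ}
    (hv : v ∈ W) (h : ∀ q ∈ pivots W, v q = 0) : v = 0 := by
  by_contra hne
  have hsne : (Finset.univ.filter fun j => v j ≠ 0).Nonempty := by
    obtain ⟨j, hj⟩ := Function.ne_iff.1 hne
    exact ⟨j, by simpa using hj⟩
  set q := (Finset.univ.filter fun j => v j ≠ 0).min' hsne with hq
  have hqmem : v q ≠ 0 := by
    have := Finset.min'_mem _ hsne
    simpa using this
  have hqpiv : q ∈ pivots W := by
    rw [mem_pivots]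
    refine ⟨v, hv, hqmem, fun j hj => ?_⟩
    by_contra hj0
    have : q ≤ j := Finset.min'_le _ _ (by simpa using hj0)
    exact absurd hj (not_lt.2 this)
  exact hqmem (h q hqpiv)

/-- A choice of vectors of `W` with given leading coordinates. -/
lemma exists_lead (W : Submodule ℂ (Fin n → ℂ)) :
    ∃ w : {q // q ∈ pivots W} → (Fin n → ℂ),
      ∀ q, w q ∈ W ∧ w q q.1 ≠ 0 ∧ ∀ j < q.1, w q j = 0 := by
  have : ∀ q : {q // q ∈ pivots W}, ∃ v, v ∈ W ∧ v q.1 ≠ 0 ∧ ∀ j < q.1, v j = 0 := by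
    rintro ⟨q, hq⟩
    obtain ⟨v, h1, h2, h3⟩ := mem_pivots.1 hq
    exact ⟨v, h1, h2, h3⟩
  choose w hw using this
  exact ⟨w, hw⟩

lemma card_pivots_le (W : Submodule ℂ (Fin n → ℂ)) :
    (pivots W).card ≤ finrank ℂ W := by
  obtain ⟨w, hw⟩ := exists_lead W
  let w' : {q // q ∈ pivots W} → W := fun q => ⟨w q, (hw q).1⟩
  have hli : LinearIndependent ℂ w' := by
    rw [Fintype.linearIndependent_iff]
    intro g hg
    by_contra hne
    push_neg at hne
    obtain ⟨q1, hq1⟩ := hne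
    have hsne : (Finset.univ.filter fun q => g q ≠ 0).Nonempty := ⟨q1, by simpa using hq1⟩
    set q0 := (Finset.univ.filter fun q => g q ≠ 0).min' hsne with hq0
    have hg0 : g q0 ≠ 0 := (Finset.mem_filter.1 (Finset.min'_mem _ hsne)).2
    have := congrArg (fun v : W => (v : Fin n → ℂ) q0.1) hg
    simp only [Submodule.coe_sum, Finset.sum_apply, Submodule.coe_smul, Pi.smul_apply,
      smul_eq_mul, ZeroMemClass.coe_zero, Pi.zero_apply] at this
    have heval : ∀ q : {q // q ∈ pivots W}, q ≠ q0 → g q * w q q0.1 = 0 := by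
      intro q hq
      rcases eq_or_ne (g q) 0 with h | h
      · rw [h, zero_mul]
      · have hle : q0 ≤ q := Finset.min'_le _ _ (by simpa using h)
        have hlt : q0.1 < q.1 := by
          have := lt_of_le_of_ne hle (Ne.symm hq)
          exact this
        rw [(hw q).2.2 q0.1 hlt, mul_zero]
    rw [Finset.sum_eq_single q0 (fun q _ hq => heval q hq) (by simp)] at this
    exact hg0 (by simpa [(hw q0).2.1] using this)
  have := hli.fintype_card_le_finrank
  simpa using this

noncomputable def resPiv (W : Submodule ℂ (Fin n → ℂ)) :
    W →ₗ[ℂ] ({q // q ∈ pivots W} → ℂ) :=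
  (LinearMap.funLeft ℂ ℂ (fun q : {q // q ∈ pivots W} => q.1)).comp W.subtype

lemma resPiv_injective (W : Submodule ℂ (Fin n → ℂ)) :
    Function.Injective (resPiv W) := by
  rw [← LinearMap.ker_eq_bot, LinearMap.ker_eq_bot']
  intro v hv
  have : (v : Fin n → ℂ) = 0 := by
    apply eq_zero_of_vanish_on_pivots v.2
    intro q hq
    exact congrFun hv ⟨q, hq⟩
  exact Subtype.ext this

lemma card_pivots (W : Submodule ℂ (Fin n → ℂ)) :
    (pivots W).card = finrank ℂ W := by
  refine le_antisymm (card_pivots_le W) ?_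
  have := LinearMap.finrank_le_finrank_of_injective (resPiv_injective W)
  rwa [Module.finrank_pi, Fintype.card_coe] at this

lemma resPiv_surjective (W : Submodule ℂ (Fin n → ℂ)) :
    Function.Surjective (resPiv W) := by
  refine (LinearMap.injective_iff_surjective_of_finrank_eq_finrank ?_).1 (resPiv_injective W)
  rw [Module.finrank_pi, Fintype.card_coe, card_pivots]

/-- Canonical-like vectors: value 1 at a pivot, 0 at every other pivot. -/
lemma exists_adapted_vector {W : Submodule ℂ (Fin n → ℂ)} {q : Fin n} (hq : q ∈ pivots W) :
    ∃ v, v ∈ W ∧ v q = 1 ∧ ∀ p ∈ pivots W, p ≠ q → v p = 0 := by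
  obtain ⟨v, hv⟩ := resPiv_surjective W (Pi.single ⟨q, hq⟩ 1)
  refine ⟨v, v.2, ?_, ?_⟩
  · have := congrFun hv ⟨q, hq⟩
    simpa [resPiv] using this
  · intro p hp hne
    have h1 := congrFun hv ⟨p, hp⟩
    have hne' : (⟨p, hp⟩ : {q // q ∈ pivots W}) ≠ ⟨q, hq⟩ :=
      fun h => hne (congrArg Subtype.val h)
    have h2 : Pi.single (M := fun _ : {q // q ∈ pivots W} => ℂ) ⟨q, hq⟩ 1 ⟨p, hp⟩ = 0 :=
      by rw [Pi.single_eq_of_ne hne']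
    rw [h2] at h1
    simpa [resPiv] using h1

open Module Finset

/-- Index type of the free entries of a chart matrix for level function `ℓ`. -/
abbrev LIdx {m r : ℕ} (ℓ : Fin m → Fin r) : Type :=
  {qp : Fin m × Fin m // ℓ qp.2 < ℓ qp.1}

/-- The strictly "level-lower-triangular" matrix with free entries `θ`. -/
def Nmat {m r : ℕ} (ℓ : Fin m → Fin r) (θ : LIdx ℓ → ℂ) : Matrix (Fin m) (Fin m) ℂ :=
  Matrix.of fun q p => if h : ℓ p < ℓ q then θ ⟨(q, p), h⟩ else 0

/-- The chart matrix: identity plus `Nmat`. -/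
def Gmat {m r : ℕ} (ℓ : Fin m → Fin r) (θ : LIdx ℓ → ℂ) : Matrix (Fin m) (Fin m) ℂ :=
  1 + Nmat ℓ θ

lemma Gmat_apply {m r : ℕ} (ℓ : Fin m → Fin r) (θ : LIdx ℓ → ℂ) (q p : Fin m) :
    Gmat ℓ θ q p = if h : ℓ p < ℓ q then θ ⟨(q, p), h⟩ else if q = p then 1 else 0 := by
  simp only [Gmat, Matrix.add_apply, Nmat, Matrix.of_apply, Matrix.one_apply]
  rcases eq_or_ne q p with rfl | hne
  · simp
  · simp [hne]

lemma Nmat_pow_ne_zero {m r : ℕ} (ℓ : Fin m → Fin r) (θ : LIdx ℓ → ℂ) :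
    ∀ (k : ℕ) (q p : Fin m), ((Nmat ℓ θ) ^ k) q p ≠ 0 → (ℓ p : ℕ) + k ≤ (ℓ q : ℕ) := by
  intro k
  induction k with
  | zero =>
    intro q p h
    rcases eq_or_ne q p with rfl | hne
    · simp
    · exfalso; apply h; simp [Matrix.one_apply, hne]
  | succ k ih =>
    intro q p h
    rw [pow_succ, Matrix.mul_apply] at h
    obtain ⟨j, hj⟩ := Finset.exists_ne_zero_of_sum_ne_zero h
    have h1 : ((Nmat ℓ θ) ^ k) q j ≠ 0 := fun h0 => hj.2 (by rw [h0, zero_mul])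
    have h2 : (Nmat ℓ θ) j p ≠ 0 := fun h0 => hj.2 (by rw [h0, mul_zero])
    have h3 := ih q j h1
    have h4 : ℓ p < ℓ j := by
      by_contra h0
      exact h2 (by simp [Nmat, h0])
    omega

lemma Nmat_pow_r {m r : ℕ} (ℓ : Fin m → Fin r) (θ : LIdx ℓ → ℂ) :
    (Nmat ℓ θ) ^ r = 0 := by
  ext q p
  by_contra h
  have := Nmat_pow_ne_zero ℓ θ r q p h
  have := (ℓ q).2
  omega

/-- Polynomial inverse of `Gmat`. -/
noncomputable def Ginv {m r : ℕ} (ℓ : Fin m → Fin r) (θ : LIdx ℓ → ℂ) : Matrix (Fin m) (Fin m) ℂ :=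
  ∑ k ∈ Finset.range r, (-(Nmat ℓ θ)) ^ k

lemma neg_Nmat_pow_r {m r : ℕ} (ℓ : Fin m → Fin r) (θ : LIdx ℓ → ℂ) :
    (-(Nmat ℓ θ)) ^ r = 0 := by
  rw [neg_pow, Nmat_pow_r, mul_zero]

lemma Ginv_mul_Gmat {m r : ℕ} (ℓ : Fin m → Fin r) (θ : LIdx ℓ → ℂ) :
    Ginv ℓ θ * Gmat ℓ θ = 1 := by
  have := geom_sum_mul_neg (-(Nmat ℓ θ)) r
  rw [neg_Nmat_pow_r, sub_zero, sub_neg_eq_add] at this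
  simpa [Ginv, Gmat] using this

lemma Gmat_mul_Ginv {m r : ℕ} (ℓ : Fin m → Fin r) (θ : LIdx ℓ → ℂ) :
    Gmat ℓ θ * Ginv ℓ θ = 1 := by
  have := mul_neg_geom_sum (-(Nmat ℓ θ)) r
  rw [neg_Nmat_pow_r, sub_zero, sub_neg_eq_add] at this
  simpa [Ginv, Gmat] using this

/-- Columns of `Gmat`. -/
lemma Gmat_col {m r : ℕ} (ℓ : Fin m → Fin r) (θ : LIdx ℓ → ℂ) (p : Fin m) :
    (Gmat ℓ θ).mulVec (Pi.single p 1) = fun q => Gmat ℓ θ q p := by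
  ext q
  rw [Matrix.mulVec_single]
  exact mul_one _

lemma Gmat_cols_linearIndependent {m r : ℕ} (ℓ : Fin m → Fin r) (θ : LIdx ℓ → ℂ) :
    LinearIndependent ℂ (fun p q => Gmat ℓ θ q p) := by
  rw [Fintype.linearIndependent_iff]
  intro g hg
  have h1 : (Gmat ℓ θ).mulVec g = 0 := by
    ext q
    have := congrFun hg q
    simpa [Matrix.mulVec, dotProduct, mul_comm] using this
  have h2 : g = (Ginv ℓ θ * Gmat ℓ θ).mulVec g := by
    rw [Ginv_mul_Gmat]; simp
  intro i
  rw [h2, ← Matrix.mulVec_mulVec, h1]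
  simp

/-- Realize a family of adapted column vectors as a chart matrix. -/
lemma exists_theta {m r : ℕ} (ℓ : Fin m → Fin r) (v : Fin m → Fin m → ℂ)
    (h1 : ∀ p, v p p = 1)
    (h0 : ∀ q p, q ≠ p → ¬ ℓ p < ℓ q → v p q = 0) :
    ∃ θ : LIdx ℓ → ℂ, ∀ q p, Gmat ℓ θ q p = v p q := by
  refine ⟨fun s => v s.1.2 s.1.1, fun q p => ?_⟩
  rw [Gmat_apply]
  split_ifs with h h'
  · rfl
  · rw [h', h1]
  · exact (h0 q p h' h).symm

lemma fin_castSucc_lt_succ_iff {r : ℕ} {a b : Fin r} : a.castSucc < b.succ ↔ a ≤ b := by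
  rw [Fin.lt_def, Fin.le_def]
  simp only [Fin.coe_castSucc, Fin.val_succ]
  omega

lemma fin_succ_le_iff_castSucc_lt {r : ℕ} {a : Fin r} {i : Fin (r+1)} :
    a.castSucc < i ↔ a.succ ≤ i := by
  rw [Fin.lt_def, Fin.le_def]
  simp only [Fin.coe_castSucc, Fin.val_succ]
  omega

lemma fin_castSucc_lt_castSucc_iff {r : ℕ} {a b : Fin r} : a.castSucc < b.castSucc ↔ a < b := by
  rw [Fin.lt_def, Fin.lt_def]
  simp only [Fin.coe_castSucc]

lemma vertex_chart {n r : ℕ} (hr : 0 < r) (W : Fin (r+1) → Submodule ℂ (Fin n → ℂ))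
    (hmono : ∀ i j : Fin (r+1), i ≤ j → W i ≤ W j) (hbot : W 0 = ⊥)
    (htop : W (Fin.last r) = ⊤) (d : Fin r → ℕ)
    (hdim : ∀ i : Fin r, finrank ℂ (W i.succ) = finrank ℂ (W i.castSucc) + d i) :
    ∃ (ℓ : Fin n → Fin r) (θ : LIdx ℓ → ℂ),
      (∀ i : Fin r, (Finset.univ.filter fun p => ℓ p = i).card = d i) ∧
      (∀ p : Fin n, (fun q => Gmat ℓ θ q p) ∈ W (ℓ p).succ) ∧
      (∀ i : Fin (r+1), ∀ w ∈ W i, ∀ q : Fin n, ¬ (ℓ q).castSucc < i →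
        (Ginv ℓ θ).mulVec w q = 0) := by
  classical
  -- the level function
  have hne : ∀ p : Fin n, (Finset.univ.filter
      fun i : Fin r => p ∈ pivots (W i.succ)).Nonempty := by
    intro p
    refine ⟨⟨r - 1, by omega⟩, ?_⟩
    simp only [Finset.mem_filter, Finset.mem_univ, true_and]
    have hsucc : (⟨r - 1, by omega⟩ : Fin r).succ = Fin.last r := by
      ext; simp [Fin.succ, Fin.last]; omega
    rw [hsucc, htop, pivots_top]
    exact Finset.mem_univ p
  set ℓ : Fin n → Fin r := fun p =>
    ((Finset.univ.filter fun i : Fin r => p ∈ pivots (W i.succ)).min' (hne p)) with hℓ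
  have hP1 : ∀ p, p ∈ pivots (W (ℓ p).succ) := by
    intro p
    have := Finset.min'_mem _ (hne p)
    simpa using this
  have hP2 : ∀ p (i : Fin r), p ∈ pivots (W i.succ) → ℓ p ≤ i := by
    intro p i hi
    exact Finset.min'_le _ _ (by simpa using hi)
  have hP3 : ∀ p (i : Fin (r+1)), p ∈ pivots (W i) ↔ (ℓ p).castSucc < i := by
    intro p i
    constructor
    · intro hp
      have hi0 : i ≠ 0 := by
        rintro rfl
        rw [hbot, pivots_bot] at hp
        exact absurd hp (Finset.notMem_empty p)
      have hle : ℓ p ≤ i.pred hi0 := by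
        apply hP2
        rwa [Fin.succ_pred]
      have := fin_castSucc_lt_succ_iff.2 hle
      rwa [Fin.succ_pred] at this
    · intro hlt
      have hle : (ℓ p).succ ≤ i := fin_succ_le_iff_castSucc_lt.1 hlt
      exact pivots_mono (hmono _ _ hle) (hP1 p)
  -- adapted vectors
  have hv : ∀ p : Fin n, ∃ v, v ∈ W (ℓ p).succ ∧ v p = 1 ∧
      ∀ q ∈ pivots (W (ℓ p).succ), q ≠ p → v q = 0 :=
    fun p => exists_adapted_vector (hP1 p)
  choose v hvW hv1 hv0 using hv
  obtain ⟨θ, hθ⟩ := exists_theta ℓ (fun p q => v p q) (fun p => hv1 p)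
    (by
      intro q p hqp hnlt
      apply hv0 p q _ hqp
      rw [hP3]
      exact fin_castSucc_lt_succ_iff.2 (not_lt.1 hnlt))
  have hcol : ∀ p, (fun q => Gmat ℓ θ q p) = v p := by
    intro p; funext q; exact hθ q p
  -- fiber counts via pivot cards
  have hA : ∀ i : Fin (r+1),
      (Finset.univ.filter fun p => (ℓ p).castSucc < i) = pivots (W i) := by
    intro i
    ext p
    simp only [Finset.mem_filter, Finset.mem_univ, true_and]
    exact (hP3 p i).symm
  have hAcard : ∀ i : Fin (r+1),
      (Finset.univ.filter fun p => (ℓ p).castSucc < i).card = finrank ℂ (W i) := by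
    intro i; rw [hA, card_pivots]
  refine ⟨ℓ, θ, ?_, ?_, ?_⟩
  · -- fiber cardinalities
    intro i
    have hsub : (Finset.univ.filter fun p => (ℓ p).castSucc < i.castSucc) ⊆
        (Finset.univ.filter fun p => (ℓ p).castSucc < i.succ) := by
      intro p hp
      simp only [Finset.mem_filter, Finset.mem_univ, true_and] at *
      exact lt_of_lt_of_le hp (Fin.castSucc_le_succ i)
    have heq : (Finset.univ.filter fun p => ℓ p = i) =
        (Finset.univ.filter fun p => (ℓ p).castSucc < i.succ) \
        (Finset.univ.filter fun p => (ℓ p).castSucc < i.castSucc) := by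
      ext p
      simp only [Finset.mem_filter, Finset.mem_univ, true_and, Finset.mem_sdiff,
        fin_castSucc_lt_succ_iff, fin_castSucc_lt_castSucc_iff, not_lt]
      constructor
      · rintro rfl; exact ⟨le_refl _, le_refl _⟩
      · rintro ⟨h1, h2⟩; exact le_antisymm h1 h2
    rw [heq, Finset.card_sdiff_of_subset hsub, hAcard, hAcard, hdim i]
    omega
  · -- columns lie in the filtration
    intro p
    rw [hcol]
    exact hvW p
  · -- vanishing of `Ginv`-coordinates
    intro i w hw q hq
    -- span description of `W i`
    have hli : LinearIndependent ℂ
        (fun p : {p : Fin n // (ℓ p).castSucc < i} => fun q => Gmat ℓ θ q p.1) :=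
      (Gmat_cols_linearIndependent ℓ θ).comp Subtype.val Subtype.val_injective
    have hspanle : Submodule.span ℂ (Set.range
        (fun p : {p : Fin n // (ℓ p).castSucc < i} => fun q => Gmat ℓ θ q p.1)) ≤ W i := by
      rw [Submodule.span_le]
      rintro _ ⟨p, rfl⟩
      have : (ℓ p.1).succ ≤ i := fin_succ_le_iff_castSucc_lt.1 p.2
      refine hmono _ _ this ?_
      show (fun q => Gmat ℓ θ q p.1) ∈ W (ℓ p.1).succ
      rw [hcol]
      exact hvW p.1
    have hspan : Submodule.span ℂ (Set.range
        (fun p : {p : Fin n // (ℓ p).castSucc < i} => fun q => Gmat ℓ θ q p.1)) = W i := by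
      apply Submodule.eq_of_le_of_finrank_le hspanle
      rw [finrank_span_eq_card hli, Fintype.card_subtype, hAcard]
    -- the linear functional
    set φ : (Fin n → ℂ) →ₗ[ℂ] ℂ :=
      (LinearMap.proj q).comp (Matrix.mulVecLin (Ginv ℓ θ)) with hφ
    have hker : W i ≤ LinearMap.ker φ := by
      rw [← hspan, Submodule.span_le]
      rintro _ ⟨p, rfl⟩
      simp only [SetLike.mem_coe, LinearMap.mem_ker, hφ, LinearMap.coe_comp,
        Function.comp_apply, Matrix.mulVecLin_apply, LinearMap.proj_apply]
      have hcol2 : (fun q => Gmat ℓ θ q p.1) = (Gmat ℓ θ).mulVec (Pi.single p.1 1) :=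
        (Gmat_col ℓ θ p.1).symm
      rw [hcol2, Matrix.mulVec_mulVec, Ginv_mul_Gmat, Matrix.one_mulVec]
      have hqp : q ≠ p.1 := by
        rintro rfl
        exact hq p.2
      exact Pi.single_eq_of_ne hqp 1
    have := hker hw
    simpa [hφ] using this

open Module Finset

section Counting

lemma sum_comp_fiber {P : Type*} [Fintype P] [DecidableEq P] {r : ℕ} (f : P → Fin r)
    (h : Fin r → ℕ) :
    ∑ p, h (f p) = ∑ i, (Finset.univ.filter fun p => f p = i).card * h i := by
  classical
  calc ∑ p, h (f p) = ∑ p, ∑ i, if f p = i then h i else 0 := by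
        refine Finset.sum_congr rfl fun p _ => ?_
        rw [Finset.sum_ite_eq Finset.univ (f p) h]
        simp
    _ = ∑ i, ∑ p, if f p = i then h i else 0 := Finset.sum_comm
    _ = ∑ i, (Finset.univ.filter fun p => f p = i).card * h i := by
        refine Finset.sum_congr rfl fun i _ => ?_
        rw [← Finset.sum_filter, Finset.sum_const, smul_eq_mul]

lemma card_rel {P Q : Type*} [Fintype P] [Fintype Q] {r : ℕ} (f : P → Fin r) (g : Q → Fin r)
    (R : Fin r → Fin r → Prop) [DecidableRel R] :
    (Finset.univ.filter fun z : P × Q => R (f z.1) (g z.2)).card =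
      ∑ i, ∑ j, if R i j then (Finset.univ.filter fun p => f p = i).card *
        (Finset.univ.filter fun q => g q = j).card else 0 := by
  classical
  rw [Finset.card_filter, Fintype.sum_prod_type]
  calc (∑ p : P, ∑ q : Q, if R (f p) (g q) then 1 else 0)
      = ∑ p : P, ∑ j, (Finset.univ.filter fun q => g q = j).card *
          (if R (f p) j then 1 else 0) := by
        refine Finset.sum_congr rfl fun p _ => ?_
        exact sum_comp_fiber g fun j => if R (f p) j then 1 else 0
    _ = ∑ i, (Finset.univ.filter fun p => f p = i).card * ∑ j,
          (Finset.univ.filter fun q => g q = j).card * (if R i j then 1 else 0) := by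
        exact sum_comp_fiber f fun i => ∑ j, (Finset.univ.filter fun q => g q = j).card *
          (if R i j then 1 else 0)
    _ = ∑ i, ∑ j, if R i j then (Finset.univ.filter fun p => f p = i).card *
          (Finset.univ.filter fun q => g q = j).card else 0 := by
        refine Finset.sum_congr rfl fun i _ => ?_
        rw [Finset.mul_sum]
        refine Finset.sum_congr rfl fun j _ => ?_
        split_ifs <;> ring

end Counting

section Assembly

variable {Vt At : Type} [Fintype Vt] [Fintype At]

abbrev Chart (α : Vt → ℕ) (r : ℕ) : Type := ∀ x : Vt, Fin (α x) → Fin r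

variable (hd tl : At → Vt) (α : Vt → ℕ) {r : ℕ}

abbrev TIdx (c : Chart α r) (a : At) : Type :=
  {qp : Fin (α (hd a)) × Fin (α (tl a)) // c (hd a) qp.1 ≤ c (tl a) qp.2}

abbrev PSpace (c : Chart α r) : Type :=
  (∀ x : Vt, LIdx (c x) → ℂ) × (∀ a : At, TIdx hd tl α c a → ℂ)

abbrev RepSp : Type := ∀ a : At, Fin (α (hd a)) → Fin (α (tl a)) → ℂ

def Tmat (c : Chart α r) (a : At) (τ : TIdx hd tl α c a → ℂ) :
    Matrix (Fin (α (hd a))) (Fin (α (tl a))) ℂ :=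
  Matrix.of fun q p => if h : c (hd a) q ≤ c (tl a) p then τ ⟨(q, p), h⟩ else 0

noncomputable def chartMap (c : Chart α r) (z : PSpace hd tl α c) : RepSp hd tl α :=
  fun a q p => (Gmat (c (hd a)) (z.1 (hd a)) * Tmat hd tl α c a (z.2 a) *
    Ginv (c (tl a)) (z.1 (tl a))) q p

section Diff

lemma diff_mul_entry {P : Type*} [NormedAddCommGroup P] [NormedSpace ℝ P]
    {ι κ σ : Type*} [Fintype κ] (A : P → Matrix ι κ ℂ) (B : P → Matrix κ σ ℂ)
    (hA : ∀ q j, Differentiable ℝ fun z => A z q j)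
    (hB : ∀ j p, Differentiable ℝ fun z => B z j p) (q : ι) (p : σ) :
    Differentiable ℝ fun z => (A z * B z) q p := by
  simp only [Matrix.mul_apply]
  exact Differentiable.fun_sum fun j _ => (hA q j).mul (hB j p)

lemma diff_pow_entry {P : Type*} [NormedAddCommGroup P] [NormedSpace ℝ P]
    {ι : Type*} [Fintype ι] [DecidableEq ι] (A : P → Matrix ι ι ℂ)
    (hA : ∀ q p, Differentiable ℝ fun z => A z q p) :
    ∀ (k : ℕ) (q p : ι), Differentiable ℝ fun z => ((A z) ^ k) q p := by
  intro k
  induction k with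
  | zero =>
    intro q p
    simp only [pow_zero]
    exact differentiable_const _
  | succ k ih =>
    intro q p
    simp only [pow_succ]
    exact diff_mul_entry (fun z => (A z) ^ k) A ih hA q p

lemma diff_proj1 (c : Chart α r) (x : Vt) (s : LIdx (c x)) :
    Differentiable ℝ fun z : PSpace hd tl α c => z.1 x s :=
  (((ContinuousLinearMap.proj s).comp ((ContinuousLinearMap.proj x).comp
    (ContinuousLinearMap.fst ℝ (∀ x : Vt, LIdx (c x) → ℂ)
      (∀ a : At, TIdx hd tl α c a → ℂ))))).differentiable

lemma diff_proj2 (c : Chart α r) (a : At) (s : TIdx hd tl α c a) :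
    Differentiable ℝ fun z : PSpace hd tl α c => z.2 a s :=
  (((ContinuousLinearMap.proj s).comp ((ContinuousLinearMap.proj a).comp
    (ContinuousLinearMap.snd ℝ (∀ x : Vt, LIdx (c x) → ℂ)
      (∀ a : At, TIdx hd tl α c a → ℂ))))).differentiable

lemma diff_G_entry (c : Chart α r) (x : Vt) (q p : Fin (α x)) :
    Differentiable ℝ fun z : PSpace hd tl α c => Gmat (c x) (z.1 x) q p := by
  by_cases h : c x p < c x q
  · simp only [Gmat_apply, dif_pos h]
    exact diff_proj1 hd tl α c x _
  · simp only [Gmat_apply, dif_neg h]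
    exact differentiable_const _

lemma diff_N_entry (c : Chart α r) (x : Vt) (q p : Fin (α x)) :
    Differentiable ℝ fun z : PSpace hd tl α c => Nmat (c x) (z.1 x) q p := by
  by_cases h : c x p < c x q
  · simp only [Nmat, Matrix.of_apply, dif_pos h]
    exact diff_proj1 hd tl α c x _
  · simp only [Nmat, Matrix.of_apply, dif_neg h]
    exact differentiable_const _

lemma diff_Ginv_entry (c : Chart α r) (x : Vt) (q p : Fin (α x)) :
    Differentiable ℝ fun z : PSpace hd tl α c => Ginv (c x) (z.1 x) q p := by
  simp only [Ginv, Finset.sum_apply, Matrix.sum_apply]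
  refine Differentiable.fun_sum fun k _ => ?_
  refine diff_pow_entry (fun z : PSpace hd tl α c => -(Nmat (c x) (z.1 x))) ?_ k q p
  intro q' p'
  simp only [Matrix.neg_apply]
  exact (diff_N_entry hd tl α c x q' p').neg

lemma diff_T_entry (c : Chart α r) (a : At) (q : Fin (α (hd a))) (p : Fin (α (tl a))) :
    Differentiable ℝ fun z : PSpace hd tl α c => Tmat hd tl α c a (z.2 a) q p := by
  by_cases h : c (hd a) q ≤ c (tl a) p
  · simp only [Tmat, Matrix.of_apply, dif_pos h]
    exact diff_proj2 hd tl α c a _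
  · simp only [Tmat, Matrix.of_apply, dif_neg h]
    exact differentiable_const _

lemma chartMap_differentiable (c : Chart α r) :
    Differentiable ℝ (chartMap hd tl α c) := by
  rw [differentiable_pi]
  intro a
  rw [differentiable_pi]
  intro q
  rw [differentiable_pi]
  intro p
  exact diff_mul_entry
    (fun z : PSpace hd tl α c => Gmat (c (hd a)) (z.1 (hd a)) * Tmat hd tl α c a (z.2 a))
    (fun z : PSpace hd tl α c => Ginv (c (tl a)) (z.1 (tl a)))
    (fun q' j => diff_mul_entry _ _ (diff_G_entry hd tl α c (hd a))
      (diff_T_entry hd tl α c a) q' j)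
    (fun j p' => diff_Ginv_entry hd tl α c (tl a) j p') q p

end Diff

end Assembly


section Assembly2

variable {Vt At : Type} [Fintype Vt] [Fintype At] (hd tl : At → Vt) (α : Vt → ℕ) {r : ℕ}

lemma mul_col {m k l : ℕ} (X : Matrix (Fin m) (Fin k) ℂ) (Y : Matrix (Fin k) (Fin l) ℂ)
    (p : Fin l) : (fun q => (X * Y) q p) = X.mulVec (fun j => Y j p) := by
  funext q
  simp [Matrix.mul_apply, Matrix.mulVec, dotProduct]

lemma chart_surj (hr : 0 < r) (αs : Fin r → Vt → ℕ)
    (M : RepSp hd tl α) (hM : HasFiltration hd tl α M αs) :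
    ∃ ℓc : Chart α r,
      (∀ x i, (Finset.univ.filter fun p => ℓc x p = i).card = αs i x) ∧
      ∃ z : PSpace hd tl α ℓc, chartMap hd tl α ℓc z = M := by
  classical
  obtain ⟨F, hsub, hmono, hbot, htop, hdim⟩ := hM
  have hvc : ∀ x : Vt, ∃ (ℓ : Fin (α x) → Fin r) (θ : LIdx ℓ → ℂ),
      (∀ i : Fin r, (Finset.univ.filter fun p => ℓ p = i).card = αs i x) ∧
      (∀ p : Fin (α x), (fun q => Gmat ℓ θ q p) ∈ F (ℓ p).succ x) ∧
      (∀ i : Fin (r+1), ∀ w ∈ F i x, ∀ q : Fin (α x), ¬ (ℓ q).castSucc < i →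
        (Ginv ℓ θ).mulVec w q = 0) :=
    fun x => vertex_chart hr (fun i => F i x) (fun i j h => hmono i j h x)
      (hbot x) (htop x) (fun i => αs i x) (fun i => hdim i x)
  choose ℓc θc hcard hcolW hvan using hvc
  refine ⟨ℓc, hcard, ?_⟩
  refine ⟨⟨θc, fun a s => (Ginv (ℓc (hd a)) (θc (hd a)) * Matrix.of (M a) *
    Gmat (ℓc (tl a)) (θc (tl a))) s.1.1 s.1.2⟩, ?_⟩
  have hT : ∀ a : At, Tmat hd tl α ℓc a (fun s => (Ginv (ℓc (hd a)) (θc (hd a)) * Matrix.of (M a) *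
      Gmat (ℓc (tl a)) (θc (tl a))) s.1.1 s.1.2) =
      Ginv (ℓc (hd a)) (θc (hd a)) * Matrix.of (M a) * Gmat (ℓc (tl a)) (θc (tl a)) := by
    intro a
    ext q p
    simp only [Tmat, Matrix.of_apply]
    split_ifs with h
    · rfl
    · -- vanishing of the lower block entries
      have hcolmem : (fun q' => Gmat (ℓc (tl a)) (θc (tl a)) q' p) ∈
          F (ℓc (tl a) p).succ (tl a) := hcolW (tl a) p
      have hw : (Matrix.of (M a)).mulVec (fun q' => Gmat (ℓc (tl a)) (θc (tl a)) q' p) ∈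
          F (ℓc (tl a) p).succ (hd a) :=
        hsub ((ℓc (tl a) p).succ) a _ hcolmem
      have hnot : ¬ (ℓc (hd a) q).castSucc < (ℓc (tl a) p).succ := by
        rw [fin_castSucc_lt_succ_iff]
        exact h
      have h0 := hvan (hd a) ((ℓc (tl a) p).succ) _ hw q hnot
      have heq : (Ginv (ℓc (hd a)) (θc (hd a)) * Matrix.of (M a) *
          Gmat (ℓc (tl a)) (θc (tl a))) q p =
          (Ginv (ℓc (hd a)) (θc (hd a))).mulVec
            ((Matrix.of (M a)).mulVec (fun q' => Gmat (ℓc (tl a)) (θc (tl a)) q' p)) q := by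
        rw [Matrix.mulVec_mulVec]
        have := congrFun (mul_col (Ginv (ℓc (hd a)) (θc (hd a)) * Matrix.of (M a))
          (Gmat (ℓc (tl a)) (θc (tl a))) p) q
        exact this
      rw [heq, h0]
  funext a
  funext q p
  show (Gmat (ℓc (hd a)) (θc (hd a)) *
      Tmat hd tl α ℓc a (fun s => (Ginv (ℓc (hd a)) (θc (hd a)) * Matrix.of (M a) *
        Gmat (ℓc (tl a)) (θc (tl a))) s.1.1 s.1.2) *
      Ginv (ℓc (tl a)) (θc (tl a))) q p = M a q p
  rw [hT a]
  set A := Gmat (ℓc (hd a)) (θc (hd a))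
  set A' := Ginv (ℓc (hd a)) (θc (hd a))
  set B := Gmat (ℓc (tl a)) (θc (tl a))
  set B' := Ginv (ℓc (tl a)) (θc (tl a))
  have hid : A * (A' * Matrix.of (M a) * B) * B' = Matrix.of (M a) := by
    rw [← Matrix.mul_assoc A (A' * Matrix.of (M a)) B, ← Matrix.mul_assoc A A' (Matrix.of (M a)),
      Gmat_mul_Ginv, Matrix.one_mul, Matrix.mul_assoc (Matrix.of (M a)) B B',
      Gmat_mul_Ginv, Matrix.mul_one]
  rw [hid]
  rfl

end Assembly2

section Final

variable {Vt At : Type} [Fintype Vt] [Fintype At] (hd tl : At → Vt) (α : Vt → ℕ) {r : ℕ}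

lemma finrank_fun_complex (ι : Type) [Fintype ι] : finrank ℝ (ι → ℂ) = 2 * Fintype.card ι := by
  rw [Module.finrank_pi_fintype ℝ]
  simp [Complex.finrank_real_complex, mul_comm]

lemma finrank_matrix_fun (m k : ℕ) : finrank ℝ (Fin m → Fin k → ℂ) = 2 * (m * k) := by
  rw [Module.finrank_pi_fintype ℝ]
  simp only [finrank_fun_complex, Fintype.card_fin]
  rw [Finset.sum_const]
  simp only [Finset.card_univ, Fintype.card_fin, smul_eq_mul]
  ring

lemma repsp_finrank : finrank ℝ (RepSp hd tl α) = 2 * ∑ a, α (hd a) * α (tl a) := by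
  rw [Module.finrank_pi_fintype ℝ]
  rw [Finset.mul_sum]
  exact Finset.sum_congr rfl fun a _ => finrank_matrix_fun _ _

lemma pspace_finrank (c : Chart α r) :
    finrank ℝ (PSpace hd tl α c) =
      2 * ((∑ x, Fintype.card (LIdx (c x))) + ∑ a, Fintype.card (TIdx hd tl α c a)) := by
  rw [Module.finrank_prod, Module.finrank_pi_fintype ℝ, Module.finrank_pi_fintype ℝ]
  simp only [finrank_fun_complex]
  rw [← Finset.mul_sum, ← Finset.mul_sum, Nat.mul_add]

end Final

section Final2

variable {Vt At : Type} [Fintype Vt] [Fintype At] (hd tl : At → Vt) (α : Vt → ℕ) {r : ℕ}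

lemma sum_ite_pull {γ : Type*} (s : Finset γ) (P : Prop) [Decidable P] (f : γ → ℤ) :
    ∑ x ∈ s, (if P then f x else 0) = if P then ∑ x ∈ s, f x else 0 := by
  split_ifs <;> simp

lemma pspace_lt (αs : Fin r → Vt → ℕ) (hsum : ∀ x, α x = ∑ i, αs i x) (c : Chart α r)
    (hgood : ∀ x i, (Finset.univ.filter fun p => c x p = i).card = αs i x)
    (hneg : ∑ i : Fin r, ∑ j : Fin r,
      (if i < j then eulerForm hd tl (αs i) (αs j) else 0) < 0) :
    finrank ℝ (PSpace hd tl α c) < finrank ℝ (RepSp hd tl α) := by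
  classical
  rw [pspace_finrank, repsp_finrank]
  have key : ((∑ x, Fintype.card (LIdx (c x))) : ℤ) + (∑ a, Fintype.card (TIdx hd tl α c a))
      < ∑ a, (α (hd a) : ℤ) * α (tl a) := by
    push_cast
    set T1 : Fin r → Fin r → ℤ := fun i j => ∑ x, (αs i x : ℤ) * αs j x with hT1
    set U : Fin r → Fin r → ℤ := fun i j => ∑ a, (αs i (hd a) : ℤ) * αs j (tl a) with hU
    set U' : Fin r → Fin r → ℤ := fun i j => ∑ a, (αs i (tl a) : ℤ) * αs j (hd a) with hU'
    have hS : ∑ i : Fin r, ∑ j : Fin r, (if i < j then eulerForm hd tl (αs i) (αs j) else 0)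
        = ∑ i, ∑ j, if i < j then T1 i j - U' i j else 0 := rfl
    rw [hS] at hneg
    have hA : ∀ x : Vt, (Fintype.card (LIdx (c x)) : ℤ)
        = ∑ i, ∑ j, if j < i then (αs i x : ℤ) * αs j x else 0 := by
      intro x
      rw [Fintype.card_subtype]
      rw [card_rel (c x) (c x) (fun i j : Fin r => j < i)]
      push_cast
      refine Finset.sum_congr rfl fun i _ => Finset.sum_congr rfl fun j _ => ?_
      rw [hgood x i, hgood x j]
    have hB : ∀ a : At, (Fintype.card (TIdx hd tl α c a) : ℤ)
        = ∑ i, ∑ j, if i ≤ j then (αs i (hd a) : ℤ) * αs j (tl a) else 0 := by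
      intro a
      rw [Fintype.card_subtype]
      rw [card_rel (c (hd a)) (c (tl a)) (fun i j : Fin r => i ≤ j)]
      push_cast
      refine Finset.sum_congr rfl fun i _ => Finset.sum_congr rfl fun j _ => ?_
      rw [hgood (hd a) i, hgood (tl a) j]
    have hAsum : ((∑ x, Fintype.card (LIdx (c x))) : ℤ)
        = ∑ i, ∑ j, if j < i then T1 i j else 0 := by
      push_cast
      rw [Finset.sum_congr rfl fun x _ => hA x, Finset.sum_comm]
      refine Finset.sum_congr rfl fun i _ => ?_
      rw [Finset.sum_comm]
      exact Finset.sum_congr rfl fun j _ => sum_ite_pull _ _ _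
    have hBsum : ((∑ a, Fintype.card (TIdx hd tl α c a)) : ℤ)
        = ∑ i, ∑ j, if i ≤ j then U i j else 0 := by
      push_cast
      rw [Finset.sum_congr rfl fun a _ => hB a, Finset.sum_comm]
      refine Finset.sum_congr rfl fun i _ => ?_
      rw [Finset.sum_comm]
      exact Finset.sum_congr rfl fun j _ => sum_ite_pull _ _ _
    have hn : (∑ a, (α (hd a) : ℤ) * α (tl a)) = ∑ i, ∑ j, U i j := by
      have h1 : ∀ a : At, (α (hd a) : ℤ) * α (tl a)
          = ∑ i, ∑ j, (αs i (hd a) : ℤ) * αs j (tl a) := by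
        intro a
        rw [hsum (hd a), hsum (tl a)]
        push_cast
        rw [Finset.sum_mul_sum]
      rw [Finset.sum_congr rfl fun a _ => h1 a, Finset.sum_comm]
      refine Finset.sum_congr rfl fun i _ => ?_
      rw [Finset.sum_comm]
    have hT1symm : ∀ i j, T1 j i = T1 i j := fun i j =>
      Finset.sum_congr rfl fun x _ => mul_comm _ _
    have hUU' : ∀ i j, U j i = U' i j := fun i j =>
      Finset.sum_congr rfl fun a _ => mul_comm _ _
    have f1 : ∑ i, ∑ j, (if j < i then T1 i j else 0)
        = ∑ i, ∑ j, (if i < j then T1 i j else 0) := by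
      rw [Finset.sum_comm]
      exact Finset.sum_congr rfl fun i _ => Finset.sum_congr rfl fun j _ => by
        rcases lt_or_ge i j with h | h
        · rw [if_pos h, if_pos h, hT1symm]
        · rw [if_neg (not_lt.2 h), if_neg (not_lt.2 h)]
    have f3 : ∑ i, ∑ j, (if j < i then U i j else 0)
        = ∑ i, ∑ j, (if i < j then U' i j else 0) := by
      rw [Finset.sum_comm]
      exact Finset.sum_congr rfl fun i _ => Finset.sum_congr rfl fun j _ => by
        rcases lt_or_ge i j with h | h
        · rw [if_pos h, if_pos h, hUU']
        · rw [if_neg (not_lt.2 h), if_neg (not_lt.2 h)]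
    have f2 : ∑ i, ∑ j, U i j = (∑ i, ∑ j, (if i ≤ j then U i j else 0))
        + ∑ i, ∑ j, (if j < i then U i j else 0) := by
      rw [← Finset.sum_add_distrib]
      refine Finset.sum_congr rfl fun i _ => ?_
      rw [← Finset.sum_add_distrib]
      refine Finset.sum_congr rfl fun j _ => ?_
      rcases le_or_gt i j with h | h
      · rw [if_pos h, if_neg (not_lt.2 h), add_zero]
      · rw [if_neg (not_le.2 h), if_pos h, zero_add]
    have hsplit : ∑ i, ∑ j, (if i < j then T1 i j - U' i j else 0)
        = (∑ i, ∑ j, (if i < j then T1 i j else 0))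
          - ∑ i, ∑ j, (if i < j then U' i j else 0) := by
      rw [← Finset.sum_sub_distrib]
      refine Finset.sum_congr rfl fun i _ => ?_
      rw [← Finset.sum_sub_distrib]
      refine Finset.sum_congr rfl fun j _ => ?_
      split_ifs with h
      · rfl
      · ring
    rw [hsplit] at hneg
    rw [hAsum, hBsum, hn, f1, f2, f3]
    linarith
  have keyN : (∑ x, Fintype.card (LIdx (c x))) + (∑ a, Fintype.card (TIdx hd tl α c a))
      < ∑ a, α (hd a) * α (tl a) := by
    have : ((∑ a, α (hd a) * α (tl a) : ℕ) : ℤ) = ∑ a, (α (hd a) : ℤ) * α (tl a) := by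
      push_cast; rfl
    exact_mod_cast key.trans_le this.ge
  omega

end Final2


/-- If `(α_i)` is a generic filtration dimension for `α = ∑ α_i` then
`∑_{i<j} ⟨α_i, α_j⟩ ≥ 0`. -/
theorem generic_filtration_euler_sum_nonneg {Vt At : Type} [Fintype Vt] [Fintype At]
    (hd tl : At → Vt) (α : Vt → ℕ) {r : ℕ} (αs : Fin r → Vt → ℕ)
    (hsum : ∀ x, α x = ∑ i, αs i x)
    (hgen : ∀ M : ∀ a : At, Matrix (Fin (α (hd a))) (Fin (α (tl a))) ℂ,
      HasFiltration hd tl α M αs) :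
    0 ≤ ∑ i : Fin r, ∑ j : Fin r,
      if i < j then eulerForm hd tl (αs i) (αs j) else 0 := by
  classical
  by_contra hneg
  push_neg at hneg
  rcases Nat.eq_zero_or_pos r with hr0 | hr
  · subst hr0
    simp at hneg
  · have hcov : (Set.univ : Set (RepSp hd tl α)) ⊆
        ⋃ c : {c : Chart α r //
          ∀ x i, (Finset.univ.filter fun p => c x p = i).card = αs i x},
          Set.range (chartMap hd tl α c.1) := by
      intro M _
      obtain ⟨c, hc, z, hz⟩ := chart_surj hd tl α hr αs M (hgen M)
      exact Set.mem_iUnion.2 ⟨⟨c, hc⟩, ⟨z, hz⟩⟩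
    exact not_univ_subset_iUnion_range _
      (fun c => chartMap_differentiable hd tl α c.1)
      (fun c => pspace_lt hd tl α αs hsum c.1 c.2 hneg) hcov
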